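/- arXiv:1512.03408 — 2 statements merged into one kernel-verified Lean document; each statement's English description precedes it below -/
import Mathlib

section
/- Let N be a complete nest and M a weakly closed subspace of B(H). Define φ(P) = ⋁{Q ∈ N : ∃ R ∈ N, R < P, Q B(H) R^⊥ ⊆ M}. Then for all P ∈ N, φ(P) B(H) P^⊥ ⊆ φ(P) B(H) (P_−)^⊥ ⊆ M, where P_− = ⋁{Q ∈ N : Q < P}. -/
/-- The order on orthogonal projections: `P ≤ Q` encoded as `P*Q = P ∧ Q*P = P`. -/
def opLe {H : Type} [NormedAddCommGroup H] [InnerProductSpace ℂ H]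
    (P Q : H →L[ℂ] H) : Prop := P * Q = P ∧ Q * P = P

/-- Strict order on projections. -/
def opLt {H : Type} [NormedAddCommGroup H] [InnerProductSpace ℂ H]
    (P Q : H →L[ℂ] H) : Prop := opLe P Q ∧ P ≠ Q

/-- A complete nest: a totally ordered complete sublattice of the lattice of orthogonal
projections on `H`, containing `0` and `1`.  Completeness means that every subset has a
least upper bound and a greatest lower bound (computed in the full projection lattice)
belonging to the nest. -/
structure IsNest {H : Type} [NormedAddCommGroup H] [InnerProductSpace ℂ H] [CompleteSpace H]
    (N : Set (H →L[ℂ] H)) : Prop where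
  proj : ∀ P ∈ N, IsSelfAdjoint P ∧ IsIdempotentElem P
  zero_mem : (0 : H →L[ℂ] H) ∈ N
  one_mem : (1 : H →L[ℂ] H) ∈ N
  total : ∀ P ∈ N, ∀ Q ∈ N, opLe P Q ∨ opLe Q P
  complete_sup : ∀ S ⊆ N, ∃ B ∈ N, (∀ P ∈ S, opLe P B) ∧
    ∀ C : H →L[ℂ] H, IsSelfAdjoint C → IsIdempotentElem C → (∀ P ∈ S, opLe P C) → opLe B C
  complete_inf : ∀ S ⊆ N, ∃ B ∈ N, (∀ P ∈ S, opLe B P) ∧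
    ∀ C : H →L[ℂ] H, IsSelfAdjoint C → IsIdempotentElem C → (∀ P ∈ S, opLe C P) → opLe C B

/-- `B` is the supremum, taken in the nest `N`, of the subset `S` of `N`. -/
def IsNestSup {H : Type} [NormedAddCommGroup H] [InnerProductSpace ℂ H]
    (N S : Set (H →L[ℂ] H)) (B : H →L[ℂ] H) : Prop :=
  B ∈ N ∧ (∀ P ∈ S, opLe P B) ∧ ∀ C ∈ N, (∀ P ∈ S, opLe P C) → opLe B C

/-- `B` is the infimum, taken in the nest `N`, of the subset `S` of `N`. -/
def IsNestInf {H : Type} [NormedAddCommGroup H] [InnerProductSpace ℂ H]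
    (N S : Set (H →L[ℂ] H)) (B : H →L[ℂ] H) : Prop :=
  B ∈ N ∧ (∀ P ∈ S, opLe B P) ∧ ∀ C ∈ N, (∀ P ∈ S, opLe C P) → opLe C B

/-- The nest algebra `T(N)` of a nest `N`: all `T` with `P^⊥ T P = 0` for all `P ∈ N`. -/
def nestAlg {H : Type} [NormedAddCommGroup H] [InnerProductSpace ℂ H]
    (N : Set (H →L[ℂ] H)) : Set (H →L[ℂ] H) :=
  {T | ∀ P ∈ N, (1 - P) * T * P = 0}

/-- A subset of `B(H)` is weakly closed if it is closed in the weak operator topology. -/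
def WClosed {H : Type} [NormedAddCommGroup H] [InnerProductSpace ℂ H] [CompleteSpace H]
    (M : Set (H →L[ℂ] H)) : Prop :=
  IsClosed ((ContinuousLinearMapWOT.ofCLM : (H →L[ℂ] H) → (H →WOT[ℂ] H)) '' M)

/-- The closure of a subset of `B(H)` in the weak operator topology. -/
def wClosure {H : Type} [NormedAddCommGroup H] [InnerProductSpace ℂ H] [CompleteSpace H]
    (S : Set (H →L[ℂ] H)) : Set (H →L[ℂ] H) :=
  (ContinuousLinearMapWOT.ofCLM : (H →L[ℂ] H) → (H →WOT[ℂ] H)) ⁻¹' (closure ((ContinuousLinearMapWOT.ofCLM : (H →L[ℂ] H) → (H →WOT[ℂ] H)) '' S))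

/-- The rank-one operator `x ⊗ y : z ↦ ⟨z,x⟩y` (inner product linear in its first variable,
i.e. `⟨z,x⟩ = ⟪x,z⟫` in Mathlib's convention). -/
noncomputable def rankOne {H : Type} [NormedAddCommGroup H] [InnerProductSpace ℂ H]
    (x y : H) : H →L[ℂ] H :=
  (innerSL ℂ x).smulRight y
/-- The set `{Q ∈ N : ∃ R ∈ N, R < P, Q B(H) R^⊥ ⊆ M}` whose supremum defines `φ(P)`. -/
def phiSet {H : Type} [NormedAddCommGroup H] [InnerProductSpace ℂ H] [CompleteSpace H]
    (N : Set (H →L[ℂ] H)) (M : Submodule ℂ (H →L[ℂ] H)) (P : H →L[ℂ] H) :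
    Set (H →L[ℂ] H) :=
  {Q | Q ∈ N ∧ ∃ R ∈ N, opLt R P ∧ ∀ A : H →L[ℂ] H, Q * A * (1 - R) ∈ M}

open scoped InnerProductSpace ComplexConjugate
open Topology Filter

section AuxProj

variable {H : Type} [NormedAddCommGroup H] [InnerProductSpace ℂ H]

lemma opLe_trans {P Q R : H →L[ℂ] H} (h1 : opLe P Q) (h2 : opLe Q R) : opLe P R := by
  constructor
  · calc P * R = P * Q * R := by rw [h1.1]
      _ = P * (Q * R) := mul_assoc ..
      _ = P * Q := by rw [h2.1]
      _ = P := h1.1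
  · calc R * P = R * (Q * P) := by rw [h1.2]
      _ = R * Q * P := (mul_assoc ..).symm
      _ = Q * P := by rw [h2.2]
      _ = P := h1.2

omit [InnerProductSpace ℂ H] in
/-- Index type for a chain of operators, with a preorder that needs no hypotheses. -/
def ChainIdx (S : Set (H →L[ℂ] H)) : Type := ↥S

namespace ChainIdx

variable {S : Set (H →L[ℂ] H)}

def mk (Q : H →L[ℂ] H) (h : Q ∈ S) : ChainIdx S := (⟨Q, h⟩ : ↥S)

def val (a : ChainIdx S) : H →L[ℂ] H := Subtype.val (a : ↥S)

lemma mem (a : ChainIdx S) : a.val ∈ S := Subtype.property (a : ↥S)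

instance : Preorder (ChainIdx S) where
  le a b := opLe a.val b.val ∨ a = b
  le_refl a := Or.inr rfl
  le_trans a b c hab hbc := by
    rcases hab with hab | rfl
    · rcases hbc with hbc | rfl
      · exact Or.inl (opLe_trans hab hbc)
      · exact Or.inl hab
    · exact hbc

end ChainIdx

variable [CompleteSpace H]

lemma opLe_antisymm {P Q : H →L[ℂ] H} (hP : IsSelfAdjoint P) (hQ : IsSelfAdjoint Q)
    (h1 : opLe P Q) (h2 : opLe Q P) : P = Q := by
  have h := congrArg star h1.1
  rw [star_mul, hP.star_eq, hQ.star_eq, h2.1] at h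
  exact h.symm

lemma proj_norm_le {Q : H →L[ℂ] H} (hsa : IsSelfAdjoint Q) (hid : IsIdempotentElem Q)
    (y : H) : ‖Q y‖ ≤ ‖y‖ := by
  have h1 : ⟪Q y, Q y⟫_ℂ = ⟪y, Q (Q y)⟫_ℂ := by
    nth_rewrite 1 [← hsa.adjoint_eq]
    exact ContinuousLinearMap.adjoint_inner_left Q (Q y) y
  have h2 : Q (Q y) = Q y := by
    rw [← ContinuousLinearMap.mul_apply, hid.eq]
  rw [h2] at h1
  have h3 : ‖Q y‖ ^ 2 = ‖⟪Q y, Q y⟫_ℂ‖ := by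
    rw [inner_self_eq_norm_sq_to_K]
    simp [norm_pow]
  have h4 : ‖⟪y, Q y⟫_ℂ‖ ≤ ‖y‖ * ‖Q y‖ := norm_inner_le_norm _ _
  rw [h1] at h3
  nlinarith [norm_nonneg (Q y), norm_nonneg y]

/-- If `C ∘ Q = Q` and both are selfadjoint, then `opLe Q C`. -/
lemma opLe_of_left {Q C : H →L[ℂ] H} (hQ : IsSelfAdjoint Q) (hC : IsSelfAdjoint C)
    (h : C * Q = Q) : opLe Q C := by
  refine ⟨?_, h⟩
  have h' := congrArg star h
  rwa [star_mul, hQ.star_eq, hC.star_eq] at h'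

omit [CompleteSpace H] in
lemma proj_fix {Q : H →L[ℂ] H} (hid : IsIdempotentElem Q) {x : H}
    (hx : x ∈ LinearMap.range (Q : H →ₗ[ℂ] H)) : Q x = x := by
  obtain ⟨y, rfl⟩ := hx
  change Q (Q y) = Q y
  rw [← ContinuousLinearMap.mul_apply, hid.eq]

omit [CompleteSpace H] in
lemma range_mono_of_opLe {Q R : H →L[ℂ] H} (h : opLe Q R) :
    LinearMap.range (Q : H →ₗ[ℂ] H) ≤ LinearMap.range (R : H →ₗ[ℂ] H) := by
  rintro x ⟨y, rfl⟩
  exact ⟨Q y, by change R (Q y) = Q y; rw [← ContinuousLinearMap.mul_apply, h.2]⟩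

/-- The supremum of a nonempty chain of orthogonal projections is a strong (hence weak)
limit of the chain. -/
lemma sup_chain_tendsto (S : Set (H →L[ℂ] H)) (hne : S.Nonempty)
    (hproj : ∀ Q ∈ S, IsSelfAdjoint Q ∧ IsIdempotentElem Q)
    (htot : ∀ P ∈ S, ∀ Q ∈ S, opLe P Q ∨ opLe Q P)
    (B : H →L[ℂ] H)
    (hub : ∀ Q ∈ S, opLe Q B)
    (hleast : ∀ C : H →L[ℂ] H, IsSelfAdjoint C → IsIdempotentElem C →
      (∀ Q ∈ S, opLe Q C) → opLe B C) :
    ∃ l : Filter (H →L[ℂ] H), l.NeBot ∧ (∀ᶠ Q in l, Q ∈ S) ∧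
      ∀ x : H, Filter.Tendsto (fun Q : H →L[ℂ] H => Q x) l (𝓝 (B x)) := by
  haveI hSne : Nonempty (ChainIdx S) := by
    obtain ⟨Q, hQ⟩ := hne; exact ⟨ChainIdx.mk Q hQ⟩
  haveI : IsDirected (ChainIdx S) (· ≤ ·) := ⟨fun a b => by
    rcases htot _ a.mem _ b.mem with h | h
    · exact ⟨b, Or.inl h, le_refl b⟩
    · exact ⟨a, le_refl a, Or.inl h⟩⟩
  haveI : (Filter.atTop : Filter (ChainIdx S)).NeBot :=
    Filter.atTop_neBot_iff.mpr ⟨‹_›, ‹_›⟩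
  -- the closed subspace generated by the ranges
  set K0 : Submodule ℂ H := ⨆ q : ChainIdx S, LinearMap.range (q.val : H →ₗ[ℂ] H) with hK0
  set K : Submodule ℂ H := K0.topologicalClosure with hK
  haveI : CompleteSpace K := K0.isClosed_topologicalClosure.completeSpace_coe
  set E : H →L[ℂ] H := K.subtypeL ∘L K.orthogonalProjectionOnto with hE
  have hEsa : IsSelfAdjoint E := isSelfAdjoint_starProjection K
  have hEmem : ∀ x : H, E x ∈ K := fun x => (K.orthogonalProjectionOnto x).2
  have hEfix : ∀ x ∈ K, E x = x := by
    intro x hx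
    have := Submodule.orthogonalProjectionOnto_mem_subspace_eq_self (⟨x, hx⟩ : K)
    simpa [hE] using congrArg (Subtype.val) this
  have hEid : IsIdempotentElem E :=
    ContinuousLinearMap.ext fun x => hEfix _ (hEmem x)
  have hrange_le : ∀ q : ChainIdx S, LinearMap.range (q.val : H →ₗ[ℂ] H) ≤ K := fun q =>
    le_trans (le_iSup (fun q : ChainIdx S => LinearMap.range (q.val : H →ₗ[ℂ] H)) q)
      (Submodule.le_topologicalClosure _)
  have hEub : ∀ Q ∈ S, opLe Q E := by
    intro Q hQ
    refine opLe_of_left (hproj _ hQ).1 hEsa (ContinuousLinearMap.ext fun x => ?_)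
    exact hEfix _ (hrange_le (ChainIdx.mk Q hQ) ⟨x, rfl⟩)
  have hBE : opLe B E := hleast E hEsa hEid hEub
  refine ⟨Filter.map ChainIdx.val Filter.atTop, Filter.NeBot.map ‹_› _,
    Filter.eventually_map.mpr (Filter.Eventually.of_forall (fun q : ChainIdx S => q.mem)), fun x => ?_⟩
  refine Filter.tendsto_map' ?_
  rw [Metric.tendsto_nhds]
  intro ε hε
  have hBx : B x ∈ K := by
    have : E (B x) = B x := by
      rw [← ContinuousLinearMap.mul_apply, hBE.2]
    rw [← this]; exact hEmem _
  have hBx' : B x ∈ closure (K0 : Set H) := by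
    rwa [← Submodule.topologicalClosure_coe]
  rw [Metric.mem_closure_iff] at hBx'
  obtain ⟨u, huK, hu⟩ := hBx' (ε / 2) (by linarith)
  have hdir : Directed (· ≤ ·) (fun q : ChainIdx S => LinearMap.range (q.val : H →ₗ[ℂ] H)) := by
    intro a b
    rcases htot _ a.mem _ b.mem with h | h
    · exact ⟨b, range_mono_of_opLe h, le_rfl⟩
    · exact ⟨a, le_rfl, range_mono_of_opLe h⟩
  obtain ⟨q0, hq0⟩ := (Submodule.mem_iSup_of_directed _ hdir).mp huK
  filter_upwards [Filter.eventually_ge_atTop q0] with q hq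
  have hq' : opLe q0.val q.val := by
    rcases hq with hq | rfl
    · exact hq
    · exact ⟨(hproj _ q0.mem).2.eq, (hproj _ q0.mem).2.eq⟩
  have hQS := q.mem
  have h1 : q.val (B x) = q.val x := by
    rw [← ContinuousLinearMap.mul_apply, (hub _ hQS).1]
  have h2 : q.val u = u := proj_fix (hproj _ hQS).2 (range_mono_of_opLe hq' hq0)
  have h3 : ‖q.val (B x) - u‖ ≤ ‖B x - u‖ := by
    calc ‖q.val (B x) - u‖ = ‖q.val (B x - u)‖ := by rw [map_sub, h2]
      _ ≤ ‖B x - u‖ := proj_norm_le (hproj _ hQS).1 (hproj _ hQS).2 _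
  have hdist : dist (B x) u < ε / 2 := hu
  rw [dist_eq_norm] at hdist ⊢
  have key : q.val x - B x = (q.val (B x) - u) + (u - B x) := by rw [h1]; abel
  calc ‖q.val x - B x‖ = ‖(q.val (B x) - u) + (u - B x)‖ := by rw [key]
    _ ≤ ‖q.val (B x) - u‖ + ‖u - B x‖ := norm_add_le _ _
    _ ≤ ‖B x - u‖ + ‖u - B x‖ := by linarith
    _ < ε := by rw [norm_sub_rev u (B x)]; linarith

end AuxProj

/-- For a weakly closed subspace `M` of `B(H)` and `P ∈ N`,
`φ(P) B(H) P^⊥ ⊆ φ(P) B(H) (P_−)^⊥ ⊆ M`, where `P_− = ⋁{Q ∈ N : Q < P}`. -/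
theorem phi_corner_subset
    {H : Type} [NormedAddCommGroup H] [InnerProductSpace ℂ H] [CompleteSpace H]
    (N : Set (H →L[ℂ] H)) (hN : IsNest N) (M : Submodule ℂ (H →L[ℂ] H))
    (hM : WClosed (M : Set (H →L[ℂ] H)))
    (φ : (H →L[ℂ] H) → (H →L[ℂ] H))
    (hφ : ∀ P ∈ N, IsNestSup N (phiSet N M P) (φ P))
    (P Pm : H →L[ℂ] H) (hP : P ∈ N)
    (hPm : IsNestSup N {Q | Q ∈ N ∧ opLt Q P} Pm) :
    {X | ∃ A : H →L[ℂ] H, X = φ P * A * (1 - P)} ⊆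
      {X | ∃ A : H →L[ℂ] H, X = φ P * A * (1 - Pm)} ∧
    ∀ A : H →L[ℂ] H, φ P * A * (1 - Pm) ∈ M := by
  obtain ⟨hφN, hφub, hφleast⟩ := hφ P hP
  have hPmP : opLe Pm P := hPm.2.2 P hP (fun Q hQ => hQ.2.1)
  constructor
  · -- first inclusion
    rintro X ⟨A, rfl⟩
    refine ⟨A * (1 - P), ?_⟩
    have h1 : (1 - P : H →L[ℂ] H) * (1 - Pm) = 1 - P := by
      have h2 : (1 - P : H →L[ℂ] H) * (1 - Pm) = 1 - Pm - P + P * Pm := by noncomm_ring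
      rw [h2, hPmP.2]; abel
    calc φ P * A * (1 - P) = φ P * A * ((1 - P) * (1 - Pm)) := by rw [h1]
      _ = φ P * (A * (1 - P)) * (1 - Pm) := by noncomm_ring
  intro A
  set S := phiSet N M P with hS
  have hSN : S ⊆ N := fun Q hQ => hQ.1
  have hScorner : ∀ Q ∈ S, ∀ A' : H →L[ℂ] H, Q * A' * (1 - Pm) ∈ M := by
    intro Q hQ A'
    obtain ⟨hQN, R, hRN, hRP, hRM⟩ := hQ
    have hRPm : opLe R Pm := hPm.2.1 R ⟨hRN, hRP⟩
    have h1 : (1 - Pm : H →L[ℂ] H) * (1 - R) = 1 - Pm := by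
      have h2 : (1 - Pm : H →L[ℂ] H) * (1 - R) = 1 - R - Pm + Pm * R := by noncomm_ring
      rw [h2, hRPm.2]; abel
    have h3 : Q * A' * (1 - Pm) = Q * (A' * (1 - Pm)) * (1 - R) := by
      calc Q * A' * (1 - Pm) = Q * A' * ((1 - Pm) * (1 - R)) := by rw [h1]
        _ = Q * (A' * (1 - Pm)) * (1 - R) := by noncomm_ring
    rw [h3]; exact hRM _
  by_cases hne : S.Nonempty
  · -- least upper bound among all selfadjoint idempotents
    obtain ⟨B', hB'N, hB'ub, hB'least⟩ := hN.complete_sup S hSN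
    have hφB' : opLe (φ P) B' := hφleast B' hB'N hB'ub
    have hleast' : ∀ C : H →L[ℂ] H, IsSelfAdjoint C → IsIdempotentElem C →
        (∀ Q ∈ S, opLe Q C) → opLe (φ P) C :=
      fun C h1 h2 h3 => opLe_trans hφB' (hB'least C h1 h2 h3)
    obtain ⟨l, hlne, hlS, hltend⟩ := sup_chain_tendsto S hne
      (fun Q hQ => hN.proj Q (hSN hQ))
      (fun Q1 h1 Q2 h2 => hN.total _ (hSN h1) _ (hSN h2))
      (φ P) hφub hleast'
    haveI := hlne
    have htendW : Filter.Tendsto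
        (fun Q => (ContinuousLinearMapWOT.ofCLM : (H →L[ℂ] H) → (H →WOT[ℂ] H)) (Q * A * (1 - Pm))) l
        (𝓝 ((ContinuousLinearMapWOT.ofCLM : (H →L[ℂ] H) → (H →WOT[ℂ] H)) (φ P * A * (1 - Pm)))) := by
      rw [ContinuousLinearMapWOT.tendsto_iff_forall_inner_apply_tendsto]
      intro x y
      have h := Filter.Tendsto.inner (𝕜 := ℂ) (tendsto_const_nhds (x := y))
        (hltend ((A * (1 - Pm)) x))
      simpa [ContinuousLinearMap.toWOT_apply, ContinuousLinearMap.mul_apply] using h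
    have hev : ∀ᶠ Q in l, (ContinuousLinearMapWOT.ofCLM : (H →L[ℂ] H) → (H →WOT[ℂ] H)) (Q * A * (1 - Pm)) ∈
        (ContinuousLinearMapWOT.ofCLM : (H →L[ℂ] H) → (H →WOT[ℂ] H)) '' (M : Set (H →L[ℂ] H)) :=
      hlS.mono fun Q hQ => ⟨_, hScorner Q hQ A, rfl⟩
    have hmem := hM.mem_of_tendsto htendW hev
    obtain ⟨T, hTM, hT⟩ := hmem
    have hTeq := ContinuousLinearMapWOT.ofCLM_injective hT
    rwa [← hTeq]
  · -- empty case : φ P = 0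
    have h0 : opLe (φ P) 0 := hφleast 0 hN.zero_mem (fun Q hQ => (hne ⟨Q, hQ⟩).elim)
    have hz := h0.1
    rw [mul_zero] at hz
    rw [← hz]
    simp only [zero_mul]
    exact M.zero_mem
end

section
/- Let N be a complete nest and L a weakly closed Lie T(N)-module. Then K_V(L) := weak closure of span{P T P^⊥ : P ∈ N, T ∈ L} is a weakly closed (associative) two-sided ideal of the nest algebra T(N). -/
/-- The linear equivalence from `E →L[𝕜] F` to its WOT copy. -/
noncomputable def ContinuousLinearMap.toWOT (𝕜 : Type*) (E F : Type*) [RCLike 𝕜]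
    [NormedAddCommGroup E] [NormedSpace 𝕜 E] [NormedAddCommGroup F] [NormedSpace 𝕜 F] :
    (E →L[𝕜] F) ≃ₗ[𝕜] (E →WOT[𝕜] F) :=
  (ContinuousLinearMapWOT.linearEquiv 𝕜).symm
section Aux

set_option linter.unusedSectionVars false

variable {H : Type} [NormedAddCommGroup H] [InnerProductSpace ℂ H] [CompleteSpace H]

lemma expand1 (Q T : H →L[ℂ] H) : (1 - Q) * T * Q = T * Q - Q * (T * Q) := by noncomm_ring

lemma nestAlg_mul {N : Set (H →L[ℂ] H)} {S T : H →L[ℂ] H}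
    (hS : S ∈ nestAlg N) (hT : T ∈ nestAlg N) : S * T ∈ nestAlg N := by
  intro Q hQ
  have h1 : T * Q = Q * (T * Q) := sub_eq_zero.mp (by rw [← expand1]; exact hT Q hQ)
  have h2 : (1 - Q) * S * Q = 0 := hS Q hQ
  calc (1 - Q) * (S * T) * Q = (1 - Q) * S * (T * Q) := by noncomm_ring
    _ = (1 - Q) * S * (Q * (T * Q)) := by rw [← h1]
    _ = ((1 - Q) * S * Q) * (T * Q) := by noncomm_ring
    _ = 0 := by rw [h2, zero_mul]

lemma proj_mem_nestAlg {N : Set (H →L[ℂ] H)} (hN : IsNest N) {P : H →L[ℂ] H} (hP : P ∈ N) :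
    P ∈ nestAlg N := by
  intro Q hQ
  rcases hN.total P hP Q hQ with ⟨h1, h2⟩ | ⟨h1, h2⟩
  · have h : (1 - Q) * P = 0 := by rw [sub_mul, one_mul, h2, sub_self]
    rw [mul_assoc, ← mul_assoc, h, zero_mul]
  · have hQQ : Q * Q = Q := (hN.proj Q hQ).2
    calc (1 - Q) * P * Q = (1 - Q) * (P * Q) := by rw [mul_assoc]
      _ = (1 - Q) * Q := by rw [h2]
      _ = 0 := by rw [sub_mul, one_mul, hQQ, sub_self]

lemma one_mem_nestAlg {N : Set (H →L[ℂ] H)} (hN : IsNest N) : (1 : H →L[ℂ] H) ∈ nestAlg N := by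
  intro Q hQ
  have hQQ : Q * Q = Q := (hN.proj Q hQ).2
  rw [mul_one, sub_mul, one_mul, hQQ, sub_self]

lemma nestAlg_sub {N : Set (H →L[ℂ] H)} {S T : H →L[ℂ] H}
    (hS : S ∈ nestAlg N) (hT : T ∈ nestAlg N) : S - T ∈ nestAlg N := by
  intro Q hQ
  have hs := hS Q hQ; have ht := hT Q hQ
  rw [mul_sub, sub_mul, hs, ht, sub_self]

/-- The generating set. -/
def genSet (N : Set (H →L[ℂ] H)) (L : Submodule ℂ (H →L[ℂ] H)) : Set (H →L[ℂ] H) :=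
  {X : H →L[ℂ] H | ∃ P ∈ N, ∃ T ∈ L, X = P * T * (1 - P)}

lemma gen_subset_nestAlg {N : Set (H →L[ℂ] H)} (hN : IsNest N)
    (L : Submodule ℂ (H →L[ℂ] H)) : genSet N L ⊆ nestAlg N := by
  rintro X ⟨P, hP, T, _, rfl⟩ Q hQ
  rcases hN.total P hP Q hQ with ⟨h1, h2⟩ | ⟨h1, h2⟩
  · have h : (1 - Q) * P = 0 := by rw [sub_mul, one_mul, h2, sub_self]
    calc (1 - Q) * (P * T * (1 - P)) * Q = ((1 - Q) * P) * (T * (1 - P) * Q) := by noncomm_ring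
      _ = 0 := by rw [h, zero_mul]
  · have h : (1 - P) * Q = 0 := by rw [sub_mul, one_mul, h2, sub_self]
    calc (1 - Q) * (P * T * (1 - P)) * Q = ((1 - Q) * P * T) * ((1 - P) * Q) := by noncomm_ring
      _ = 0 := by rw [h, mul_zero]

lemma mulLeft_gen {N : Set (H →L[ℂ] H)} (hN : IsNest N) {L : Submodule ℂ (H →L[ℂ] H)}
    (hLie : ∀ T ∈ L, ∀ S ∈ nestAlg N, T * S - S * T ∈ L)
    {S X : H →L[ℂ] H} (hS : S ∈ nestAlg N) (hX : X ∈ genSet N L) :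
    S * X ∈ genSet N L := by
  obtain ⟨P, hP, T, hT, rfl⟩ := hX
  have hPP : P * P = P := (hN.proj P hP).2
  have hPna : P ∈ nestAlg N := proj_mem_nestAlg hN hP
  set S' : H →L[ℂ] H := P * S * P with hS'def
  have hS'mem : S' ∈ nestAlg N := nestAlg_mul (nestAlg_mul hPna hS) hPna
  have hT' : S' * T - T * S' ∈ L := by
    have h := L.neg_mem (hLie T hT S' hS'mem)
    simpa [neg_sub] using h
  refine ⟨P, hP, S' * T - T * S', hT', ?_⟩
  have hSP : S * P = P * (S * P) := sub_eq_zero.mp (by rw [← expand1]; exact hS P hP)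
  have hS'ann : S' * (1 - P) = 0 := by
    rw [hS'def, mul_assoc, mul_sub, mul_one, hPP, sub_self, mul_zero]
  have hPS' : P * S' = S' := by rw [hS'def, ← mul_assoc, ← mul_assoc, hPP]
  calc S * (P * T * (1 - P))
      = (S * P) * (T * (1 - P)) := by noncomm_ring
    _ = (P * (S * P)) * (T * (1 - P)) := by rw [← hSP]
    _ = S' * T * (1 - P) := by rw [hS'def]; noncomm_ring
    _ = (P * S') * T * (1 - P) := by rw [hPS']
    _ = P * (S' * T) * (1 - P) - P * T * (S' * (1 - P)) := by
        rw [hS'ann, mul_zero, sub_zero]; noncomm_ring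
    _ = P * (S' * T - T * S') * (1 - P) := by noncomm_ring

lemma mulRight_gen {N : Set (H →L[ℂ] H)} (hN : IsNest N) {L : Submodule ℂ (H →L[ℂ] H)}
    (hLie : ∀ T ∈ L, ∀ S ∈ nestAlg N, T * S - S * T ∈ L)
    {S X : H →L[ℂ] H} (hS : S ∈ nestAlg N) (hX : X ∈ genSet N L) :
    X * S ∈ genSet N L := by
  obtain ⟨P, hP, T, hT, rfl⟩ := hX
  have hPP : P * P = P := (hN.proj P hP).2
  have hPna : P ∈ nestAlg N := proj_mem_nestAlg hN hP
  have h1na : (1 : H →L[ℂ] H) - P ∈ nestAlg N := nestAlg_sub (one_mem_nestAlg hN) hPna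
  set S'' : H →L[ℂ] H := (1 - P) * S * (1 - P) with hSdef
  have hS''mem : S'' ∈ nestAlg N := nestAlg_mul (nestAlg_mul h1na hS) h1na
  refine ⟨P, hP, T * S'' - S'' * T, hLie T hT S'' hS''mem, ?_⟩
  have hP1 : P * (1 - P) = 0 := by rw [mul_sub, mul_one, hPP, sub_self]
  have h11 : (1 - P : H →L[ℂ] H) * (1 - P) = 1 - P := by
    rw [sub_mul, one_mul, mul_sub, mul_one, hPP]; noncomm_ring
  have hPS'' : P * S'' = 0 := by
    rw [hSdef, ← mul_assoc, ← mul_assoc, hP1, zero_mul, zero_mul]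
  have hS''1 : S'' * (1 - P) = S'' := by rw [hSdef, mul_assoc, h11]
  have h1S : (1 - P) * S = S'' := by
    have h0 : (1 - P) * S * P = 0 := hS P hP
    have he : S'' = (1 - P) * S * 1 - (1 - P) * S * P := by rw [hSdef, mul_sub]
    rw [he, h0, sub_zero, mul_one]
  calc (P * T * (1 - P)) * S
      = P * (T * ((1 - P) * S)) := by noncomm_ring
    _ = P * (T * S'') := by rw [h1S]
    _ = P * (T * (S'' * (1 - P))) := by rw [hS''1]
    _ = P * (T * S'') * (1 - P) := by noncomm_ring
    _ = P * (T * S'') * (1 - P) - P * (S'' * T) * (1 - P) := by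
        have hz : P * (S'' * T) * (1 - P) = 0 := by
          rw [← mul_assoc, hPS'', zero_mul, zero_mul]
        rw [hz, sub_zero]
    _ = P * (T * S'' - S'' * T) * (1 - P) := by noncomm_ring

-- WOT continuity helpers
lemma cont_mulLeft_WOT (S : H →L[ℂ] H) :
    Continuous (fun A : H →WOT[ℂ] H =>
      (ContinuousLinearMap.toWOT ℂ H H) (S * (ContinuousLinearMap.toWOT ℂ H H).symm A)) := by
  apply ContinuousLinearMapWOT.continuous_of_dual_apply_continuous
  intro x y
  exact ContinuousLinearMapWOT.continuous_dual_apply x (y.comp S)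

lemma cont_mulRight_WOT (S : H →L[ℂ] H) :
    Continuous (fun A : H →WOT[ℂ] H =>
      (ContinuousLinearMap.toWOT ℂ H H) ((ContinuousLinearMap.toWOT ℂ H H).symm A * S)) := by
  apply ContinuousLinearMapWOT.continuous_of_dual_apply_continuous
  intro x y
  exact ContinuousLinearMapWOT.continuous_dual_apply (S x) y

lemma nestAlg_image_closed (N : Set (H →L[ℂ] H)) :
    IsClosed ((ContinuousLinearMap.toWOT ℂ H H) '' nestAlg N) := by
  have himg : (ContinuousLinearMap.toWOT ℂ H H) '' nestAlg N =
      ⋂ P ∈ N, ⋂ x : H, ⋂ y : H →L[ℂ] ℂ,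
        {A : H →WOT[ℂ] H | (y.comp (1 - P)) (A (P x)) = 0} := by
    ext A
    simp only [Set.mem_iInter, Set.mem_setOf_eq]
    constructor
    · rintro ⟨B, hB, rfl⟩ P hP x y
      have h0 : (1 - P) (B (P x)) = 0 := by
        have h := ContinuousLinearMap.ext_iff.mp (hB P hP) x
        simpa using h
      show y ((1 - P) (((ContinuousLinearMap.toWOT ℂ H H) B) (P x))) = 0
      rw [show ((ContinuousLinearMap.toWOT ℂ H H) B) (P x) = B (P x) from rfl, h0, map_zero]
    · intro h
      refine ⟨(ContinuousLinearMap.toWOT ℂ H H).symm A, fun P hP => ?_,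
        (ContinuousLinearMap.toWOT ℂ H H).apply_symm_apply A⟩
      ext x
      rw [ContinuousLinearMap.zero_apply]
      have key : ∀ y : H →L[ℂ] ℂ,
          y (((1 - P) * (ContinuousLinearMap.toWOT ℂ H H).symm A * P) x) = 0 :=
        fun y => h P hP x y
      have hv := key (innerSL ℂ (((1 - P) * (ContinuousLinearMap.toWOT ℂ H H).symm A * P) x))
      simp only [innerSL_apply_apply] at hv
      exact inner_self_eq_zero.mp hv
  rw [himg]
  refine isClosed_biInter fun P _ => isClosed_iInter fun x => isClosed_iInter fun y => ?_
  exact isClosed_eq (ContinuousLinearMapWOT.continuous_dual_apply (P x) (y.comp (1 - P)))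
    continuous_const

end Aux

/-- The nest algebra as a submodule. -/
def nestAlgSub {H : Type} [NormedAddCommGroup H] [InnerProductSpace ℂ H] [CompleteSpace H]
    (N : Set (H →L[ℂ] H)) : Submodule ℂ (H →L[ℂ] H) where
  carrier := nestAlg N
  add_mem' := by
    intro a b ha hb Q hQ
    rw [mul_add, add_mul, ha Q hQ, hb Q hQ, add_zero]
  zero_mem' := by intro Q hQ; rw [mul_zero, zero_mul]
  smul_mem' := by
    intro c a ha Q hQ
    rw [mul_smul_comm, smul_mul_assoc, ha Q hQ, smul_zero]

/-- For a weakly closed Lie `T(N)`-module `L`, the weak closure `K_V(L)` of the span of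
`{P T P^⊥ : P ∈ N, T ∈ L}` is a weakly closed two-sided ideal of the nest algebra. -/
theorem KV_is_weakly_closed_ideal
    {H : Type} [NormedAddCommGroup H] [InnerProductSpace ℂ H] [CompleteSpace H]
    (N : Set (H →L[ℂ] H)) (hN : IsNest N) (L : Submodule ℂ (H →L[ℂ] H))
    (hLc : WClosed (L : Set (H →L[ℂ] H)))
    (hLie : ∀ T ∈ L, ∀ S ∈ nestAlg N, T * S - S * T ∈ L) :
    wClosure (Submodule.span ℂ {X : H →L[ℂ] H | ∃ P ∈ N, ∃ T ∈ L, X = P * T * (1 - P)} :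
        Set (H →L[ℂ] H)) ⊆ nestAlg N ∧
    (∀ A ∈ wClosure (Submodule.span ℂ
        {X : H →L[ℂ] H | ∃ P ∈ N, ∃ T ∈ L, X = P * T * (1 - P)} : Set (H →L[ℂ] H)),
      ∀ B ∈ wClosure (Submodule.span ℂ
        {X : H →L[ℂ] H | ∃ P ∈ N, ∃ T ∈ L, X = P * T * (1 - P)} : Set (H →L[ℂ] H)),
        A + B ∈ wClosure (Submodule.span ℂ
          {X : H →L[ℂ] H | ∃ P ∈ N, ∃ T ∈ L, X = P * T * (1 - P)} : Set (H →L[ℂ] H))) ∧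
    (∀ c : ℂ, ∀ A ∈ wClosure (Submodule.span ℂ
        {X : H →L[ℂ] H | ∃ P ∈ N, ∃ T ∈ L, X = P * T * (1 - P)} : Set (H →L[ℂ] H)),
        c • A ∈ wClosure (Submodule.span ℂ
          {X : H →L[ℂ] H | ∃ P ∈ N, ∃ T ∈ L, X = P * T * (1 - P)} : Set (H →L[ℂ] H))) ∧
    (∀ S ∈ nestAlg N, ∀ A ∈ wClosure (Submodule.span ℂ
        {X : H →L[ℂ] H | ∃ P ∈ N, ∃ T ∈ L, X = P * T * (1 - P)} : Set (H →L[ℂ] H)),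
        S * A ∈ wClosure (Submodule.span ℂ
          {X : H →L[ℂ] H | ∃ P ∈ N, ∃ T ∈ L, X = P * T * (1 - P)} : Set (H →L[ℂ] H)) ∧
        A * S ∈ wClosure (Submodule.span ℂ
          {X : H →L[ℂ] H | ∃ P ∈ N, ∃ T ∈ L, X = P * T * (1 - P)} : Set (H →L[ℂ] H))) ∧
    WClosed (wClosure (Submodule.span ℂ
        {X : H →L[ℂ] H | ∃ P ∈ N, ∃ T ∈ L, X = P * T * (1 - P)} : Set (H →L[ℂ] H))) := by
  set ι := ContinuousLinearMap.toWOT ℂ H H with hι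
  have hGeq : {X : H →L[ℂ] H | ∃ P ∈ N, ∃ T ∈ L, X = P * T * (1 - P)} = genSet N L := rfl
  rw [hGeq]
  set W : Submodule ℂ (H →L[ℂ] H) := Submodule.span ℂ (genSet N L) with hW
  have hKmem : ∀ A : H →L[ℂ] H, A ∈ wClosure (W : Set (H →L[ℂ] H)) ↔
      ι A ∈ closure (ι '' (W : Set (H →L[ℂ] H))) := fun A => Iff.rfl
  -- closure as a submodule
  have hmapcoe : ((Submodule.map (ι : (H →L[ℂ] H) →ₗ[ℂ] (H →WOT[ℂ] H)) W : Submodule ℂ _) :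
      Set (H →WOT[ℂ] H)) = ι '' (W : Set (H →L[ℂ] H)) := by
    rw [Submodule.map_coe]; rfl
  have hclcoe : ((Submodule.map (ι : (H →L[ℂ] H) →ₗ[ℂ] (H →WOT[ℂ] H)) W).topologicalClosure :
      Set (H →WOT[ℂ] H)) = closure (ι '' (W : Set (H →L[ℂ] H))) := by
    rw [Submodule.topologicalClosure_coe, hmapcoe]
  -- membership in closure under span-stability of a multiplication map
  have hWle : (W : Set (H →L[ℂ] H)) ⊆ nestAlg N := by
    have : W ≤ nestAlgSub N := Submodule.span_le.2 (gen_subset_nestAlg hN L)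
    exact this
  refine ⟨?_, ?_, ?_, ?_, ?_⟩
  · -- contained in nest algebra
    intro A hA
    rw [hKmem] at hA
    have hsub : closure (ι '' (W : Set (H →L[ℂ] H))) ⊆ ι '' nestAlg N :=
      closure_minimal (Set.image_mono hWle) (nestAlg_image_closed N)
    obtain ⟨B, hB, hBA⟩ := hsub hA
    rwa [← ι.injective hBA]
  · -- additive
    intro A hA B hB
    rw [hKmem] at hA hB ⊢
    rw [← hclcoe] at hA hB ⊢
    rw [map_add]
    exact Submodule.add_mem _ hA hB
  · -- scalar multiples
    intro c A hA
    rw [hKmem] at hA ⊢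
    rw [← hclcoe] at hA ⊢
    rw [map_smul]
    exact Submodule.smul_mem _ c hA
  · -- ideal property
    intro S hS A hA
    rw [hKmem] at hA
    have hWl : ∀ B ∈ W, S * B ∈ W := by
      intro B hB
      have hle : W ≤ Submodule.comap (LinearMap.mulLeft ℂ S) W :=
        Submodule.span_le.2 fun X hX => Submodule.subset_span (mulLeft_gen hN hLie hS hX)
      exact hle hB
    have hWr : ∀ B ∈ W, B * S ∈ W := by
      intro B hB
      have hle : W ≤ Submodule.comap (LinearMap.mulRight ℂ S) W :=
        Submodule.span_le.2 fun X hX => Submodule.subset_span (mulRight_gen hN hLie hS hX)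
      exact hle hB
    constructor
    · rw [hKmem]
      have hmaps : Set.MapsTo (fun X : H →WOT[ℂ] H => ι (S * ι.symm X))
          (ι '' (W : Set (H →L[ℂ] H))) (ι '' (W : Set (H →L[ℂ] H))) := by
        rintro X ⟨B, hB, rfl⟩
        exact ⟨S * B, hWl B hB, by simp⟩
      have hmem := map_mem_closure (cont_mulLeft_WOT S) hA hmaps
      simpa [hι] using hmem
    · rw [hKmem]
      have hmaps : Set.MapsTo (fun X : H →WOT[ℂ] H => ι (ι.symm X * S))
          (ι '' (W : Set (H →L[ℂ] H))) (ι '' (W : Set (H →L[ℂ] H))) := by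
        rintro X ⟨B, hB, rfl⟩
        exact ⟨B * S, hWr B hB, by simp⟩
      have hmem := map_mem_closure (cont_mulRight_WOT S) hA hmaps
      simpa [hι] using hmem
  · -- weakly closed
    show IsClosed (ι '' (ι ⁻¹' closure (ι '' (W : Set (H →L[ℂ] H)))))
    rw [Set.image_preimage_eq _ (EquivLike.surjective ι)]
    exact isClosed_closure
end
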